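/- Let M be a symmetric positive definite 2n×2n real matrix and Ω = {z ∈ ℝ^{2n} : ⟨Mz, z⟩ ≤ ℏ}. Then Ω^{ℏ,σ} = Ω if and only if there exists a linear symplectic automorphism S of ℝ^{2n} such that Ω = S(B^{2n}(√ℏ)); that is, the fixed points of symplectic polar duality among centered ellipsoids are exactly the quantum blobs (symplectic images of the ball of radius √ℏ). -/

import Mathlib

open MeasureTheory Real Metric
open scoped RealInnerProductSpace Pointwise

noncomputable section

/-- `ℝⁿ` with its Euclidean structure. -/
abbrev En (n : ℕ) := EuclideanSpace ℝ (Fin n)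

/-- The phase space `ℝ²ⁿ = ℝⁿ × ℝⁿ` with its Euclidean structure, the first block of
coordinates being the positions `x` and the second block the momenta `p`. -/
abbrev PS (n : ℕ) := EuclideanSpace ℝ (Fin n ⊕ Fin n)

/-- The standard symplectic matrix `J = [[0, I], [-I, 0]]`. -/
def Jmat (n : ℕ) : Matrix (Fin n ⊕ Fin n) (Fin n ⊕ Fin n) ℝ :=
  Matrix.fromBlocks 0 1 (-1) 0

/-- The standard symplectic form `σ(z, z') = ⟨Jz, z'⟩`. -/
def symp (n : ℕ) (z z' : PS n) : ℝ := ⟪(Matrix.toEuclideanLin (Jmat n)) z, z'⟫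

/-- The quadratic form `z ↦ ⟨Mz, z⟩`. -/
def qf {m : Type*} [Fintype m] [DecidableEq m] (M : Matrix m m ℝ)
    (z : EuclideanSpace ℝ m) : ℝ := ⟪(Matrix.toEuclideanLin M) z, z⟫

/-- The symplectic `ℏ`-polar dual `Ω^{ℏ,σ} = {z' : ∀ z ∈ Ω, σ(z, z') ≤ ℏ}`. -/
def sympDual (n : ℕ) (ℏ : ℝ) (Ω : Set (PS n)) : Set (PS n) :=
  {z' | ∀ z ∈ Ω, symp n z z' ≤ ℏ}

/-- A linear automorphism of `ℝ²ⁿ` is symplectic if it preserves the symplectic form. -/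
def IsSymplectic {n : ℕ} (S : PS n ≃ₗ[ℝ] PS n) : Prop :=
  ∀ z z', symp n (S z) (S z') = symp n z z'

namespace SympBlob
open Matrix
open scoped MatrixOrder

variable {n : ℕ}

/-! ### Bridges between the Euclidean-space formulation and plain matrix algebra -/

lemma qf_eq_dot (M : Matrix (Fin n ⊕ Fin n) (Fin n ⊕ Fin n) ℝ) (z : PS n) :
    qf M z = (M *ᵥ z) ⬝ᵥ z := by
  show z.ofLp ⬝ᵥ star (M *ᵥ z.ofLp) = _; rw [star_trivial, dotProduct_comm]

lemma symp_eq_dot (z z' : PS n) : symp n z z' = (Jmat n *ᵥ z) ⬝ᵥ z' := by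
  show z'.ofLp ⬝ᵥ star (Jmat n *ᵥ z.ofLp) = _; rw [star_trivial, dotProduct_comm]

lemma norm_eq_sqrt_dot (z : PS n) : ‖z‖ = Real.sqrt (z ⬝ᵥ z) := by
  rw [norm_eq_sqrt_real_inner]; rfl

lemma dot_self_nonneg (v : Fin n ⊕ Fin n → ℝ) : 0 ≤ v ⬝ᵥ v :=
  Finset.sum_nonneg fun _ _ => mul_self_nonneg _

lemma mulVec_dot (A : Matrix (Fin n ⊕ Fin n) (Fin n ⊕ Fin n) ℝ) (x y : Fin n ⊕ Fin n → ℝ) :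
    (A *ᵥ x) ⬝ᵥ y = x ⬝ᵥ (Aᵀ *ᵥ y) := by
  rw [Matrix.dotProduct_mulVec, Matrix.vecMul_transpose]

lemma dot_ext {a b : Fin n ⊕ Fin n → ℝ} (h : ∀ w, a ⬝ᵥ w = b ⬝ᵥ w) : a = b := by
  have h2 : (a - b) ⬝ᵥ (a - b) = 0 := by
    rw [sub_dotProduct, h (a - b), sub_self]
  exact sub_eq_zero.1 (dotProduct_self_eq_zero.1 h2)

lemma mulVec_ext {P Q : Matrix (Fin n ⊕ Fin n) (Fin n ⊕ Fin n) ℝ}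
    (h : ∀ v, P *ᵥ v = Q *ᵥ v) : P = Q := by
  apply (Matrix.toLin' (R := ℝ) (m := Fin n ⊕ Fin n) (n := Fin n ⊕ Fin n)).injective
  exact LinearMap.ext fun v => by simpa [Matrix.toLin'_apply] using h v

lemma dot2_ext {P Q : Matrix (Fin n ⊕ Fin n) (Fin n ⊕ Fin n) ℝ}
    (h : ∀ v w, (P *ᵥ v) ⬝ᵥ w = (Q *ᵥ v) ⬝ᵥ w) : P = Q :=
  mulVec_ext fun v => dot_ext fun w => h v w

/-- Cauchy–Schwarz for the dot product. -/
lemma dot_le_sqrt (a b : Fin n ⊕ Fin n → ℝ) :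
    a ⬝ᵥ b ≤ Real.sqrt (a ⬝ᵥ a) * Real.sqrt (b ⬝ᵥ b) := by
  have h := real_inner_le_norm ((WithLp.equiv 2 (Fin n ⊕ Fin n → ℝ)).symm a)
      ((WithLp.equiv 2 (Fin n ⊕ Fin n → ℝ)).symm b)
  rw [norm_eq_sqrt_dot, norm_eq_sqrt_dot, EuclideanSpace.inner_eq_star_dotProduct, star_trivial,
    dotProduct_comm] at h
  exact h

lemma dot_smul_smul (A : Matrix (Fin n ⊕ Fin n) (Fin n ⊕ Fin n) ℝ) (t : ℝ)
    (v : Fin n ⊕ Fin n → ℝ) :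
    (A *ᵥ (t • v)) ⬝ᵥ (t • v) = t ^ 2 * ((A *ᵥ v) ⬝ᵥ v) := by
  rw [Matrix.mulVec_smul, smul_dotProduct, dotProduct_smul]
  simp only [smul_eq_mul]; ring

lemma symp_conj (P : Matrix (Fin n ⊕ Fin n) (Fin n ⊕ Fin n) ℝ) (v w : Fin n ⊕ Fin n → ℝ) :
    (Jmat n *ᵥ (P *ᵥ v)) ⬝ᵥ (P *ᵥ w) = ((Pᵀ * Jmat n * P) *ᵥ v) ⬝ᵥ w := by
  have h1 : (Jmat n *ᵥ (P *ᵥ v)) ⬝ᵥ (P *ᵥ w) = v ⬝ᵥ (((Jmat n * P)ᵀ * P) *ᵥ w) := by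
    rw [Matrix.mulVec_mulVec, mulVec_dot, Matrix.mulVec_mulVec]
  have h2 : ((Pᵀ * Jmat n * P) *ᵥ v) ⬝ᵥ w = v ⬝ᵥ ((Pᵀ * Jmat n * P)ᵀ *ᵥ w) :=
    mulVec_dot _ _ _
  rw [h1, h2, Matrix.transpose_mul, Matrix.transpose_mul, Matrix.transpose_mul,
    Matrix.transpose_transpose]
  simp only [Matrix.mul_assoc]

/-! ### Matrix facts -/

lemma herm_transpose {A : Matrix (Fin n ⊕ Fin n) (Fin n ⊕ Fin n) ℝ} (h : A.IsHermitian) :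
    Aᵀ = A := by
  rw [← Matrix.conjTranspose_eq_transpose_of_trivial]; exact h

lemma Jt : (Jmat n)ᵀ = -(Jmat n) := by
  simp [Jmat, fromBlocks_transpose, fromBlocks_neg]

lemma JJ : (Jmat n) * (Jmat n) = -1 := by
  simp [Jmat, fromBlocks_multiply, fromBlocks_neg, ← fromBlocks_one]

lemma JJt : (Jmat n) * (Jmat n)ᵀ = 1 := by
  rw [Jt, mul_neg, JJ, neg_neg]

lemma JtJ : (Jmat n)ᵀ * (Jmat n) = 1 := by
  rw [Jt, neg_mul, JJ, neg_neg]

lemma Jdet : IsUnit (Jmat n).det := by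
  have h : (Jmat n).det * (Jmat n)ᵀ.det = 1 := by rw [← Matrix.det_mul, JJt, Matrix.det_one]
  exact IsUnit.of_mul_eq_one _ h

lemma mulVec_ne_zero {P : Matrix (Fin n ⊕ Fin n) (Fin n ⊕ Fin n) ℝ} (h : IsUnit P.det)
    {x : Fin n ⊕ Fin n → ℝ} (hx : x ≠ 0) : P *ᵥ x ≠ 0 := by
  intro h0
  apply hx
  have h1 := congrArg (fun w => P⁻¹ *ᵥ w) h0
  simpa [Matrix.mulVec_mulVec, Matrix.nonsing_inv_mul _ h, Matrix.one_mulVec,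
    Matrix.mulVec_zero] using h1

lemma posDef_dot {M : Matrix (Fin n ⊕ Fin n) (Fin n ⊕ Fin n) ℝ} (hM : M.PosDef)
    {x : Fin n ⊕ Fin n → ℝ} (hx : x ≠ 0) : 0 < (M *ᵥ x) ⬝ᵥ x := by
  have h := hM.dotProduct_mulVec_pos hx
  rwa [star_trivial, dotProduct_comm] at h

lemma sqrt_posDef {M : Matrix (Fin n ⊕ Fin n) (Fin n ⊕ Fin n) ℝ} (hM : M.PosDef) :
    (CFC.sqrt M).PosDef := by
  have hsd : (CFC.sqrt M).PosSemidef := Matrix.nonneg_iff_posSemidef.1 (CFC.sqrt_nonneg M)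
  refine Matrix.PosDef.of_dotProduct_mulVec_pos hsd.1 (fun x hx => ?_)
  rcases lt_or_eq_of_le (hsd.dotProduct_mulVec_nonneg x) with h | h
  · exact h
  · exfalso
    have hz : CFC.sqrt M *ᵥ x = 0 := (hsd.dotProduct_mulVec_zero_iff x).1 h.symm
    have hMx : M *ᵥ x = 0 := by
      rw [← CFC.sqrt_mul_sqrt_self M hM.posSemidef.nonneg, ← Matrix.mulVec_mulVec, hz,
        Matrix.mulVec_zero]
    have h2 := hM.dotProduct_mulVec_pos hx
    rw [hMx, dotProduct_zero] at h2
    exact lt_irrefl 0 h2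

lemma posDef_transpose_mul_self {P : Matrix (Fin n ⊕ Fin n) (Fin n ⊕ Fin n) ℝ}
    (h : IsUnit P.det) : (Pᵀ * P).PosDef := by
  refine Matrix.PosDef.of_dotProduct_mulVec_pos ?_ ?_
  · rw [Matrix.IsHermitian, conjTranspose_eq_transpose_of_trivial, Matrix.transpose_mul,
      Matrix.transpose_transpose]
  · intro x hx
    rw [star_trivial]
    have key : x ⬝ᵥ ((Pᵀ * P) *ᵥ x) = (P *ᵥ x) ⬝ᵥ (P *ᵥ x) := by
      rw [← Matrix.mulVec_mulVec, mulVec_dot]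
    rw [key]
    rcases lt_or_eq_of_le (dot_self_nonneg (P *ᵥ x)) with hlt | heq
    · exact hlt
    · exact absurd (dotProduct_self_eq_zero.1 heq.symm) (mulVec_ne_zero h hx)

lemma posDef_conj {M : Matrix (Fin n ⊕ Fin n) (Fin n ⊕ Fin n) ℝ} (hM : M.PosDef)
    {P : Matrix (Fin n ⊕ Fin n) (Fin n ⊕ Fin n) ℝ} (hP : IsUnit P.det) :
    (P * M * Pᵀ).PosDef := by
  have hMt : Mᵀ = M := herm_transpose hM.1
  refine Matrix.PosDef.of_dotProduct_mulVec_pos ?_ ?_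
  · rw [Matrix.IsHermitian, conjTranspose_eq_transpose_of_trivial, Matrix.transpose_mul,
      Matrix.transpose_mul, Matrix.transpose_transpose, hMt, Matrix.mul_assoc]
  · intro x hx
    rw [star_trivial]
    have e1 : x ⬝ᵥ ((P * M * Pᵀ) *ᵥ x) = ((P * M * Pᵀ) *ᵥ x) ⬝ᵥ x :=
      dotProduct_comm _ _
    have e2 : ((P * M * Pᵀ) *ᵥ x) ⬝ᵥ x = ((M * Pᵀ) *ᵥ x) ⬝ᵥ (Pᵀ *ᵥ x) := by
      rw [show P * M * Pᵀ = P * (M * Pᵀ) from Matrix.mul_assoc _ _ _, ← Matrix.mulVec_mulVec]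
      exact mulVec_dot P _ x
    have e3 : ((M * Pᵀ) *ᵥ x) = M *ᵥ (Pᵀ *ᵥ x) := (Matrix.mulVec_mulVec _ _ _).symm
    have key : x ⬝ᵥ ((P * M * Pᵀ) *ᵥ x) = (M *ᵥ (Pᵀ *ᵥ x)) ⬝ᵥ (Pᵀ *ᵥ x) := by
      rw [e1, e2, e3]
    rw [key]
    have hPt : IsUnit Pᵀ.det := by rwa [Matrix.det_transpose]
    exact posDef_dot hM (mulVec_ne_zero hPt hx)

/-! ### The symplectic dual of an ellipsoid -/

lemma sympDual_ell {ℏ : ℝ} (hℏ : 0 < ℏ) {M : Matrix (Fin n ⊕ Fin n) (Fin n ⊕ Fin n) ℝ}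
    (hM : M.PosDef) :
    sympDual n ℏ {z | qf M z ≤ ℏ} =
      {z' : PS n | qf (Jmat n * M⁻¹ * (Jmat n)ᵀ) z' ≤ ℏ} := by
  have hRPD : (CFC.sqrt M).PosDef := sqrt_posDef hM
  set R := CFC.sqrt M with hRdef
  have hRM : R * R = M := CFC.sqrt_mul_sqrt_self M hM.posSemidef.nonneg
  have hRdet : IsUnit R.det := hRPD.det_pos.ne'.isUnit
  have hRT : Rᵀ = R := herm_transpose hRPD.1
  have hRiT : (R⁻¹)ᵀ = R⁻¹ := by rw [Matrix.transpose_nonsing_inv, hRT]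
  have hRRi : R * R⁻¹ = 1 := Matrix.mul_nonsing_inv _ hRdet
  have hRiR : R⁻¹ * R = 1 := Matrix.nonsing_inv_mul _ hRdet
  have hMinv : M⁻¹ = R⁻¹ * R⁻¹ := by rw [← hRM, Matrix.mul_inv_rev]
  have hval : ∀ z' : Fin n ⊕ Fin n → ℝ,
      ((Jmat n * M⁻¹ * (Jmat n)ᵀ) *ᵥ z') ⬝ᵥ z'
        = (R⁻¹ *ᵥ ((Jmat n)ᵀ *ᵥ z')) ⬝ᵥ (R⁻¹ *ᵥ ((Jmat n)ᵀ *ᵥ z')) := by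
    intro z'
    rw [hMinv]
    rw [show Jmat n * (R⁻¹ * R⁻¹) * (Jmat n)ᵀ = Jmat n * (R⁻¹ * (R⁻¹ * (Jmat n)ᵀ)) by
      simp only [Matrix.mul_assoc]]
    rw [← Matrix.mulVec_mulVec, mulVec_dot, ← Matrix.mulVec_mulVec, ← Matrix.mulVec_mulVec,
      mulVec_dot, hRiT]
  ext z'
  simp only [sympDual, Set.mem_setOf_eq]
  constructor
  · intro h
    rw [qf_eq_dot]
    rw [hval z']
    set u : Fin n ⊕ Fin n → ℝ := R⁻¹ *ᵥ ((Jmat n)ᵀ *ᵥ z') with hu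
    set c : ℝ := u ⬝ᵥ u with hc
    rcases eq_or_lt_of_le (dot_self_nonneg u) with h0 | hcpos
    · rw [hc, ← h0]; exact hℏ.le
    · set t : ℝ := Real.sqrt ℏ / Real.sqrt c with ht
      have hsc : (0:ℝ) < Real.sqrt c := Real.sqrt_pos.2 hcpos
      have hsh : (0:ℝ) < Real.sqrt ℏ := Real.sqrt_pos.2 hℏ
      have ht2 : t ^ 2 = ℏ / c := by
        rw [ht, div_pow, Real.sq_sqrt hℏ.le, Real.sq_sqrt hcpos.le]
      have hMR : M * R⁻¹ = R := by rw [← hRM, Matrix.mul_assoc, hRRi, Matrix.mul_one]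
      have hMu : (M *ᵥ (R⁻¹ *ᵥ u)) ⬝ᵥ (R⁻¹ *ᵥ u) = c := by
        calc (M *ᵥ (R⁻¹ *ᵥ u)) ⬝ᵥ (R⁻¹ *ᵥ u)
            = (R *ᵥ u) ⬝ᵥ (R⁻¹ *ᵥ u) := by rw [Matrix.mulVec_mulVec, hMR]
          _ = u ⬝ᵥ ((Rᵀ * R⁻¹) *ᵥ u) := by rw [mulVec_dot, Matrix.mulVec_mulVec]
          _ = u ⬝ᵥ u := by rw [hRT, hRRi, Matrix.one_mulVec]
      have hmem : ((WithLp.equiv 2 (Fin n ⊕ Fin n → ℝ)).symm (t • (R⁻¹ *ᵥ u)) : PS n)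
          ∈ {z : PS n | qf M z ≤ ℏ} := by
        rw [Set.mem_setOf_eq, qf_eq_dot]
        show (M *ᵥ (t • (R⁻¹ *ᵥ u))) ⬝ᵥ (t • (R⁻¹ *ᵥ u)) ≤ ℏ
        rw [dot_smul_smul, hMu, ht2, div_mul_cancel₀ _ hcpos.ne']
      have hle := h _ hmem
      rw [symp_eq_dot] at hle
      have hcomp : (Jmat n *ᵥ (t • (R⁻¹ *ᵥ u))) ⬝ᵥ z' = t * c := by
        rw [Matrix.mulVec_smul, smul_dotProduct, smul_eq_mul]
        congr 1
        calc (Jmat n *ᵥ (R⁻¹ *ᵥ u)) ⬝ᵥ z'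
            = (R⁻¹ *ᵥ u) ⬝ᵥ ((Jmat n)ᵀ *ᵥ z') := mulVec_dot _ _ _
          _ = u ⬝ᵥ (R⁻¹ *ᵥ ((Jmat n)ᵀ *ᵥ z')) := by rw [mulVec_dot, hRiT]
          _ = c := by rw [← hu, hc]
      have hle2 : t * c ≤ ℏ := by rw [← hcomp]; exact hle
      have htc : t * c = Real.sqrt ℏ * Real.sqrt c := by
        rw [ht]; field_simp
        rw [Real.sq_sqrt hcpos.le]
      have hcs : Real.sqrt c ≤ Real.sqrt ℏ := by
        have hh : Real.sqrt ℏ * Real.sqrt c ≤ Real.sqrt ℏ * Real.sqrt ℏ := by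
          rw [Real.mul_self_sqrt hℏ.le, ← htc]; exact hle2
        exact le_of_mul_le_mul_left hh hsh
      calc c = Real.sqrt c * Real.sqrt c := (Real.mul_self_sqrt hcpos.le).symm
        _ ≤ Real.sqrt ℏ * Real.sqrt ℏ := mul_le_mul hcs hcs hsc.le hsh.le
        _ = ℏ := Real.mul_self_sqrt hℏ.le
  · intro h z hz
    have hz' : (M *ᵥ z) ⬝ᵥ z ≤ ℏ := by rw [← qf_eq_dot]; exact hz
    have hq : ((Jmat n * M⁻¹ * (Jmat n)ᵀ) *ᵥ z') ⬝ᵥ z' ≤ ℏ := by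
      rw [← qf_eq_dot]; exact h
    rw [hval z'] at hq
    set u : Fin n ⊕ Fin n → ℝ := R⁻¹ *ᵥ ((Jmat n)ᵀ *ᵥ z') with hu
    set a : Fin n ⊕ Fin n → ℝ := R *ᵥ z with ha
    have haa : a ⬝ᵥ a ≤ ℏ := by
      calc a ⬝ᵥ a = z ⬝ᵥ ((Rᵀ * R) *ᵥ z) := by rw [ha, mulVec_dot, Matrix.mulVec_mulVec]
        _ = (M *ᵥ z) ⬝ᵥ z := by rw [hRT, hRM, dotProduct_comm]
        _ ≤ ℏ := hz'
    rw [symp_eq_dot]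
    have hRu : R *ᵥ u = (Jmat n)ᵀ *ᵥ z' := by
      rw [hu, Matrix.mulVec_mulVec, hRRi, Matrix.one_mulVec]
    calc (Jmat n *ᵥ z) ⬝ᵥ z' = z ⬝ᵥ ((Jmat n)ᵀ *ᵥ z') := mulVec_dot _ _ _
      _ = z ⬝ᵥ (R *ᵥ u) := by rw [hRu]
      _ = a ⬝ᵥ u := by rw [ha, mulVec_dot, hRT, dotProduct_comm]
      _ ≤ Real.sqrt (a ⬝ᵥ a) * Real.sqrt (u ⬝ᵥ u) := dot_le_sqrt a u
      _ ≤ Real.sqrt ℏ * Real.sqrt ℏ :=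
          mul_le_mul (Real.sqrt_le_sqrt haa) (Real.sqrt_le_sqrt hq)
            (Real.sqrt_nonneg _) (Real.sqrt_nonneg _)
      _ = ℏ := Real.mul_self_sqrt hℏ.le

/-! ### An ellipsoid determines its matrix -/

lemma qf_le_of_subset {ℏ : ℝ} (hℏ : 0 < ℏ) {M N : Matrix (Fin n ⊕ Fin n) (Fin n ⊕ Fin n) ℝ}
    (hM : M.PosDef)
    (h : ∀ v : Fin n ⊕ Fin n → ℝ, (M *ᵥ v) ⬝ᵥ v ≤ ℏ → (N *ᵥ v) ⬝ᵥ v ≤ ℏ) :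
    ∀ v, (N *ᵥ v) ⬝ᵥ v ≤ (M *ᵥ v) ⬝ᵥ v := by
  intro v
  rcases eq_or_ne v 0 with rfl | hv
  · simp [Matrix.mulVec_zero, dotProduct_zero]
  · have ha : 0 < (M *ᵥ v) ⬝ᵥ v := posDef_dot hM hv
    set a : ℝ := (M *ᵥ v) ⬝ᵥ v with hadef
    set t : ℝ := Real.sqrt (ℏ / a) with htdef
    have ht2 : t ^ 2 = ℏ / a := Real.sq_sqrt (by positivity)
    have hmem : (M *ᵥ (t • v)) ⬝ᵥ (t • v) ≤ ℏ := by
      rw [dot_smul_smul, ht2, ← hadef, div_mul_cancel₀ _ ha.ne']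
    have hN := h (t • v) hmem
    rw [dot_smul_smul, ht2] at hN
    have hpos : 0 < ℏ / a := by positivity
    have hNle : (ℏ / a) * ((N *ᵥ v) ⬝ᵥ v) ≤ (ℏ / a) * a := by
      rw [div_mul_cancel₀ _ ha.ne']; exact hN
    exact le_of_mul_le_mul_left hNle hpos

lemma ell_matrix_eq {ℏ : ℝ} (hℏ : 0 < ℏ) {M N : Matrix (Fin n ⊕ Fin n) (Fin n ⊕ Fin n) ℝ}
    (hM : M.PosDef) (hN : N.PosDef)
    (h : {z : PS n | qf M z ≤ ℏ} = {z : PS n | qf N z ≤ ℏ}) : M = N := by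
  have hiff : ∀ v : Fin n ⊕ Fin n → ℝ, ((M *ᵥ v) ⬝ᵥ v ≤ ℏ ↔ (N *ᵥ v) ⬝ᵥ v ≤ ℏ) := by
    intro v
    have := Set.ext_iff.1 h ((WithLp.equiv 2 (Fin n ⊕ Fin n → ℝ)).symm v)
    rw [Set.mem_setOf_eq, Set.mem_setOf_eq, qf_eq_dot, qf_eq_dot] at this
    exact this
  have h1 := qf_le_of_subset hℏ hM (fun v hv => (hiff v).1 hv)
  have h2 := qf_le_of_subset hℏ hN (fun v hv => (hiff v).2 hv)
  have heq : ∀ v, (M *ᵥ v) ⬝ᵥ v = (N *ᵥ v) ⬝ᵥ v := fun v => le_antisymm (h2 v) (h1 v)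
  have hMt : Mᵀ = M := herm_transpose hM.1
  have hNt : Nᵀ = N := herm_transpose hN.1
  apply dot2_ext
  intro v w
  have hMsym : (M *ᵥ w) ⬝ᵥ v = (M *ᵥ v) ⬝ᵥ w := by
    rw [mulVec_dot, hMt, dotProduct_comm]
  have hNsym : (N *ᵥ w) ⬝ᵥ v = (N *ᵥ v) ⬝ᵥ w := by
    rw [mulVec_dot, hNt, dotProduct_comm]
  have hvw := heq (v + w)
  have hv := heq v
  have hw := heq w
  simp only [Matrix.mulVec_add, add_dotProduct, dotProduct_add] at hvw
  linarith

/-! ### Ellipsoids as images of balls -/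

/-- The linear automorphism of phase space defined by an invertible matrix. -/
def matEquiv (P Q : Matrix (Fin n ⊕ Fin n) (Fin n ⊕ Fin n) ℝ)
    (hPQ : P * Q = 1) (hQP : Q * P = 1) : PS n ≃ₗ[ℝ] PS n :=
  LinearEquiv.ofLinear (Matrix.toEuclideanLin P) (Matrix.toEuclideanLin Q)
    (LinearMap.ext fun z => show WithLp.toLp 2 (P *ᵥ (Q *ᵥ z.ofLp)) = z by
      rw [Matrix.mulVec_mulVec, hPQ, Matrix.one_mulVec])
    (LinearMap.ext fun z => show WithLp.toLp 2 (Q *ᵥ (P *ᵥ z.ofLp)) = z by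
      rw [Matrix.mulVec_mulVec, hQP, Matrix.one_mulVec])

lemma ell_image {ℏ : ℝ} (hℏ0 : 0 ≤ ℏ) {M : Matrix (Fin n ⊕ Fin n) (Fin n ⊕ Fin n) ℝ}
    (S : PS n ≃ₗ[ℝ] PS n) (Q : Matrix (Fin n ⊕ Fin n) (Fin n ⊕ Fin n) ℝ)
    (hQ : ∀ z : PS n, S.symm z = Matrix.toEuclideanLin Q z)
    (hMQ : M = Qᵀ * Q) :
    {z : PS n | qf M z ≤ ℏ} = ⇑S '' closedBall (0 : PS n) (Real.sqrt ℏ) := by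
  ext z
  have himg : z ∈ ⇑S '' closedBall (0 : PS n) (Real.sqrt ℏ) ↔
      ‖S.symm z‖ ≤ Real.sqrt ℏ := by
    constructor
    · rintro ⟨w, hw, rfl⟩
      rw [LinearEquiv.symm_apply_apply]
      exact mem_closedBall_zero_iff.1 hw
    · intro hz
      exact ⟨S.symm z, mem_closedBall_zero_iff.2 hz, S.apply_symm_apply z⟩
  rw [Set.mem_setOf_eq, himg, hQ z, norm_eq_sqrt_dot]
  have hq : qf M z = (Q *ᵥ z) ⬝ᵥ (Q *ᵥ z) := by
    rw [qf_eq_dot, hMQ, ← Matrix.mulVec_mulVec, mulVec_dot, Matrix.transpose_transpose,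
      dotProduct_comm]
  have hdot : ((Matrix.toEuclideanLin Q z : PS n) ⬝ᵥ (Matrix.toEuclideanLin Q z : PS n))
      = (Q *ᵥ z) ⬝ᵥ (Q *ᵥ z) := rfl
  rw [hq, hdot]
  constructor
  · intro hle
    exact Real.sqrt_le_sqrt hle
  · intro hle
    calc (Q *ᵥ z) ⬝ᵥ (Q *ᵥ z)
        = Real.sqrt ((Q *ᵥ z) ⬝ᵥ (Q *ᵥ z)) ^ 2 := (Real.sq_sqrt (dot_self_nonneg _)).symm
      _ ≤ Real.sqrt ℏ ^ 2 := by
          apply pow_le_pow_left₀ (Real.sqrt_nonneg _) hle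
      _ = ℏ := Real.sq_sqrt hℏ0

end SympBlob

open SympBlob Matrix
open scoped MatrixOrder

theorem stmt4 (n : ℕ) (ℏ : ℝ) (hℏ : 0 < ℏ)
    (M : Matrix (Fin n ⊕ Fin n) (Fin n ⊕ Fin n) ℝ) (hM : M.PosDef) :
    sympDual n ℏ {z | qf M z ≤ ℏ} = {z | qf M z ≤ ℏ} ↔
      ∃ S : PS n ≃ₗ[ℝ] PS n, IsSymplectic S ∧
        {z | qf M z ≤ ℏ} = ⇑S '' closedBall (0 : PS n) (Real.sqrt ℏ) := by
  have hMdet : IsUnit M.det := hM.det_pos.ne'.isUnit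
  constructor
  · intro h
    rw [sympDual_ell hℏ hM] at h
    have hdualPD : (Jmat n * M⁻¹ * (Jmat n)ᵀ).PosDef := posDef_conj hM.inv Jdet
    have hMM : Jmat n * M⁻¹ * (Jmat n)ᵀ = M := ell_matrix_eq hℏ hdualPD hM h
    -- M * Jᵀ * M = Jᵀ
    have h1 : M⁻¹ * (Jmat n)ᵀ = (Jmat n)ᵀ * M := by
      have h1' := congrArg (fun X => (Jmat n)ᵀ * X) hMM
      rw [← Matrix.mul_assoc, ← Matrix.mul_assoc, JtJ, Matrix.one_mul] at h1'
      exact h1'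
    have h2 : M * (Jmat n)ᵀ * M = (Jmat n)ᵀ := by
      have h2' := congrArg (fun X => M * X) h1
      rw [← Matrix.mul_assoc, ← Matrix.mul_assoc, Matrix.mul_nonsing_inv _ hMdet,
        Matrix.one_mul] at h2'
      exact h2'.symm
    -- square root
    have hRPD : (CFC.sqrt M).PosDef := sqrt_posDef hM
    set R := CFC.sqrt M with hRdef
    have hRM : R * R = M := CFC.sqrt_mul_sqrt_self M hM.posSemidef.nonneg
    have hRdet : IsUnit R.det := hRPD.det_pos.ne'.isUnit
    have hRT : Rᵀ = R := herm_transpose hRPD.1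
    have hRiT : (R⁻¹)ᵀ = R⁻¹ := by rw [Matrix.transpose_nonsing_inv, hRT]
    have hRRi : R * R⁻¹ = 1 := Matrix.mul_nonsing_inv _ hRdet
    have hRiR : R⁻¹ * R = 1 := Matrix.nonsing_inv_mul _ hRdet
    -- A := Jᵀ R J is positive semidefinite with A² = (R⁻¹)²
    have hApsd : ((Jmat n)ᵀ * R * Jmat n).PosSemidef := by
      have h' := hRPD.posSemidef.conjTranspose_mul_mul_same (Jmat n)
      rwa [conjTranspose_eq_transpose_of_trivial] at h'
    have hRi_psd : (R⁻¹).PosSemidef := hRPD.inv.posSemidef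
    have hMJ : M⁻¹ = (Jmat n)ᵀ * M * Jmat n := by
      refine (Matrix.inv_eq_right_inv ?_)
      calc M * ((Jmat n)ᵀ * M * Jmat n) = (M * (Jmat n)ᵀ * M) * Jmat n := by
            simp only [Matrix.mul_assoc]
        _ = (Jmat n)ᵀ * Jmat n := by rw [h2]
        _ = 1 := JtJ
    have hsq : ((Jmat n)ᵀ * R * Jmat n) ^ 2 = (R⁻¹) ^ 2 := by
      have hRRX : ∀ X : Matrix (Fin n ⊕ Fin n) (Fin n ⊕ Fin n) ℝ,
          R * (R * X) = M * X := fun X => by rw [← Matrix.mul_assoc, hRM]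
      have hJJtX : ∀ X : Matrix (Fin n ⊕ Fin n) (Fin n ⊕ Fin n) ℝ,
          Jmat n * ((Jmat n)ᵀ * X) = X := fun X => by
        rw [← Matrix.mul_assoc, JJt, Matrix.one_mul]
      calc ((Jmat n)ᵀ * R * Jmat n) ^ 2
          = (Jmat n)ᵀ * (R * (Jmat n * ((Jmat n)ᵀ * (R * Jmat n)))) := by
            rw [sq]; simp only [Matrix.mul_assoc]
        _ = (Jmat n)ᵀ * (R * (R * Jmat n)) := by rw [hJJtX]
        _ = (Jmat n)ᵀ * (M * Jmat n) := by rw [hRRX]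
        _ = M⁻¹ := by rw [hMJ, Matrix.mul_assoc]
        _ = (R⁻¹) ^ 2 := by rw [sq, ← Matrix.mul_inv_rev, hRM]
    have hA_eq : (Jmat n)ᵀ * R * Jmat n = R⁻¹ := by
      rw [← CFC.sqrt_sq _ hApsd.nonneg, hsq, CFC.sqrt_sq _ hRi_psd.nonneg]
    have h3 : R * ((Jmat n)ᵀ * R * Jmat n) = 1 := by rw [hA_eq, hRRi]
    have h4 : (Jmat n)⁻¹ = R * (Jmat n)ᵀ * R := by
      apply Matrix.inv_eq_left_inv
      calc R * (Jmat n)ᵀ * R * Jmat n = R * ((Jmat n)ᵀ * R * Jmat n) := by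
            simp only [Matrix.mul_assoc]
        _ = 1 := h3
    have hJinv : (Jmat n)⁻¹ = -(Jmat n) := by
      apply Matrix.inv_eq_right_inv
      rw [mul_neg, JJ, neg_neg]
    have hRJR : R * Jmat n * R = Jmat n := by
      have h5 : -(Jmat n) = R * (Jmat n)ᵀ * R := by rw [← hJinv, h4]
      rw [Jt] at h5
      have h6 : -(Jmat n) = -(R * Jmat n * R) := by
        rw [h5]; rw [Matrix.mul_neg, Matrix.neg_mul]
      exact (neg_inj.1 h6).symm
    have hRiJRi : R⁻¹ * Jmat n * R⁻¹ = Jmat n := by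
      have hRiRX : ∀ X : Matrix (Fin n ⊕ Fin n) (Fin n ⊕ Fin n) ℝ,
          R⁻¹ * (R * X) = X := fun X => by rw [← Matrix.mul_assoc, hRiR, Matrix.one_mul]
      calc R⁻¹ * Jmat n * R⁻¹ = R⁻¹ * (R * Jmat n * R) * R⁻¹ := by rw [hRJR]
        _ = R⁻¹ * (R * (Jmat n * (R * R⁻¹))) := by simp only [Matrix.mul_assoc]
        _ = Jmat n * (R * R⁻¹) := by rw [hRiRX]
        _ = Jmat n := by rw [hRRi, Matrix.mul_one]
    refine ⟨matEquiv R⁻¹ R hRiR hRRi, ?_, ?_⟩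
    · intro z z'
      rw [symp_eq_dot, symp_eq_dot]
      show (Jmat n *ᵥ (R⁻¹ *ᵥ z)) ⬝ᵥ (R⁻¹ *ᵥ z') = (Jmat n *ᵥ z) ⬝ᵥ z'
      rw [symp_conj, hRiT, hRiJRi]
    · apply ell_image hℏ.le (matEquiv R⁻¹ R hRiR hRRi) R (fun z => rfl)
      rw [hRT, hRM]
  · rintro ⟨S, hS, himg⟩
    set A : Matrix (Fin n ⊕ Fin n) (Fin n ⊕ Fin n) ℝ :=
      Matrix.toEuclideanLin.symm (S : PS n →ₗ[ℝ] PS n) with hA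
    set A' : Matrix (Fin n ⊕ Fin n) (Fin n ⊕ Fin n) ℝ :=
      Matrix.toEuclideanLin.symm (S.symm : PS n →ₗ[ℝ] PS n) with hA'
    have hSA : ∀ z : PS n, S z = Matrix.toEuclideanLin A z := by
      intro z; rw [hA, LinearEquiv.apply_symm_apply]; rfl
    have hSA' : ∀ z : PS n, S.symm z = Matrix.toEuclideanLin A' z := by
      intro z; rw [hA', LinearEquiv.apply_symm_apply]; rfl
    have hAA' : A * A' = 1 := by
      apply mulVec_ext
      intro v
      rw [← Matrix.mulVec_mulVec, Matrix.one_mulVec]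
      have h1 := S.apply_symm_apply ((WithLp.equiv 2 (Fin n ⊕ Fin n → ℝ)).symm v)
      rw [hSA', hSA] at h1
      exact congrArg WithLp.ofLp h1
    have hA'A : A' * A = 1 := by
      apply mulVec_ext
      intro v
      rw [← Matrix.mulVec_mulVec, Matrix.one_mulVec]
      have h1 := S.symm_apply_apply ((WithLp.equiv 2 (Fin n ⊕ Fin n → ℝ)).symm v)
      rw [hSA, hSA'] at h1
      exact congrArg WithLp.ofLp h1
    have hAdet : IsUnit A.det :=
      IsUnit.of_mul_eq_one _ (by rw [← Matrix.det_mul, hAA', Matrix.det_one])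
    have hA'det : IsUnit A'.det :=
      IsUnit.of_mul_eq_one _ (by rw [← Matrix.det_mul, hA'A, Matrix.det_one])
    have hAJA : Aᵀ * Jmat n * A = Jmat n := by
      apply dot2_ext
      intro v w
      rw [← symp_conj]
      have h1 := hS ((WithLp.equiv 2 (Fin n ⊕ Fin n → ℝ)).symm v)
        ((WithLp.equiv 2 (Fin n ⊕ Fin n → ℝ)).symm w)
      rw [symp_eq_dot, symp_eq_dot, hSA, hSA] at h1
      exact h1
    set N : Matrix (Fin n ⊕ Fin n) (Fin n ⊕ Fin n) ℝ := A'ᵀ * A' with hN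
    have hNPD : N.PosDef := posDef_transpose_mul_self hA'det
    have hMN : M = N :=
      ell_matrix_eq hℏ hM hNPD (himg.trans (ell_image hℏ.le S A' hSA' rfl).symm)
    rw [sympDual_ell hℏ hM]
    suffices hfix : Jmat n * M⁻¹ * (Jmat n)ᵀ = M by rw [hfix]
    have hA'inv : A'⁻¹ = A := Matrix.inv_eq_right_inv hA'A
    have hMinv : M⁻¹ = A * Aᵀ := by
      rw [hMN, hN, Matrix.mul_inv_rev, hA'inv, ← Matrix.transpose_nonsing_inv, hA'inv]
    have h5 : Jmat n * A = A'ᵀ * Jmat n := by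
      have h5' := congrArg (fun X => A'ᵀ * X) hAJA
      rw [← Matrix.mul_assoc, ← Matrix.mul_assoc, ← Matrix.transpose_mul, hAA',
        Matrix.transpose_one, Matrix.one_mul] at h5'
      exact h5'
    have h6 : Aᵀ * (Jmat n)ᵀ = (Jmat n)ᵀ * A' := by
      have h6' := congrArg Matrix.transpose h5
      simp only [Matrix.transpose_mul, Matrix.transpose_transpose] at h6'
      exact h6'
    calc Jmat n * M⁻¹ * (Jmat n)ᵀ = (Jmat n * A) * (Aᵀ * (Jmat n)ᵀ) := by
          rw [hMinv]; simp only [Matrix.mul_assoc]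
      _ = (A'ᵀ * Jmat n) * ((Jmat n)ᵀ * A') := by rw [h5, h6]
      _ = A'ᵀ * (Jmat n * (Jmat n)ᵀ * A') := by simp only [Matrix.mul_assoc]
      _ = N := by rw [JJt, Matrix.one_mul, hN]
      _ = M := hMN.symm
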